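/- (Large Ramsey Theorem) For every k ≥ 1 and every coloring f : [ℕ]^{!ω} → {0, 1, …, k−1}, there exists an infinite set H ⊆ ℕ such that f is constant on [H]^{!ω}. -/
import Mathlib

/-- A finite set `s ⊆ ℕ` is exactly ω-large if `|s| = 1 + min s`. -/
def ExLarge (s : Finset ℕ) : Prop :=
  s.Nonempty ∧ s.card = 1 + sInf (↑s : Set ℕ)

/-- Diagonalization lemma: if for every `a` and every infinite `Z` we can find an
infinite `Y ⊆ Z` on which `t ↦ g a t` is constant on `m a`-element subsets, then
there is a single infinite `H ⊆ X` and a color `c` such that `g a t = c` whenever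
`a ∈ H`, `t ⊆ H`, all elements of `t` exceed `a`, and `t.card = m a`. -/
lemma diag {k : ℕ} (g : ℕ → Finset ℕ → Fin k) (m : ℕ → ℕ) (X : Set ℕ) (hX : X.Infinite)
    (hR : ∀ (a : ℕ) (Z : Set ℕ), Z.Infinite →
      ∃ Y, Y ⊆ Z ∧ Y.Infinite ∧ ∃ c : Fin k,
        ∀ t : Finset ℕ, ↑t ⊆ Y → t.card = m a → g a t = c) :
    ∃ H, H ⊆ X ∧ H.Infinite ∧ ∃ c : Fin k, ∀ (a : ℕ) (t : Finset ℕ), a ∈ H → ↑t ⊆ H →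
      (∀ x ∈ t, a < x) → t.card = m a → g a t = c := by
  classical
  have key : ∀ Z : {Z : Set ℕ // Z.Infinite}, ∃ p : {Z : Set ℕ // Z.Infinite} × Fin k,
      (p.1.1 : Set ℕ) ⊆ {x ∈ Z.1 | sInf Z.1 < x} ∧
      ∀ t : Finset ℕ, ↑t ⊆ p.1.1 → t.card = m (sInf Z.1) → g (sInf Z.1) t = p.2 := by
    intro Z
    have hZ' : {x ∈ Z.1 | sInf Z.1 < x}.Infinite := by
      have : {x ∈ Z.1 | sInf Z.1 < x} = Z.1 \ {x : ℕ | x ≤ sInf Z.1} := by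
        ext x; simp [not_le]
      rw [this]
      exact Z.2.diff (Set.finite_Iic (sInf Z.1))
    obtain ⟨Y, hY1, hY2, c, hc⟩ := hR (sInf Z.1) _ hZ'
    exact ⟨⟨⟨Y, hY2⟩, c⟩, hY1, hc⟩
  choose next hnext1 hnext2 using key
  set chain : ℕ → {Z : Set ℕ // Z.Infinite} :=
    fun i => Nat.rec ⟨X, hX⟩ (fun _ Z => (next Z).1) i with hchain
  have hchainsucc : ∀ i, chain (i + 1) = (next (chain i)).1 := fun i => rfl
  set a : ℕ → ℕ := fun i => sInf (chain i).1 with ha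
  set col : ℕ → Fin k := fun i => (next (chain i)).2 with hcol
  have hsucc : ∀ i, ((chain (i + 1)).1 : Set ℕ) ⊆ {x ∈ (chain i).1 | a i < x} :=
    fun i => hnext1 (chain i)
  have hsub : ∀ i, (chain (i + 1)).1 ⊆ (chain i).1 := fun i x hx => (hsucc i hx).1
  have hgt : ∀ i, ∀ x ∈ (chain (i + 1)).1, a i < x := fun i x hx => (hsucc i hx).2
  have hmem : ∀ i, a i ∈ (chain i).1 := fun i => Nat.sInf_mem (chain i).2.nonempty
  have hmono : ∀ i j, i ≤ j → (chain j).1 ⊆ (chain i).1 := by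
    intro i j hij
    induction j, hij using Nat.le_induction with
    | base => exact subset_rfl
    | succ j hij ih => exact (hsub j).trans ih
  have hXsub : ∀ i, (chain i).1 ⊆ X := fun i => hmono 0 i (Nat.zero_le i)
  have hamono : StrictMono a := strictMono_nat_of_lt_succ fun i => hgt i _ (hmem (i + 1))
  have hhom : ∀ i, ∀ t : Finset ℕ, ↑t ⊆ (chain (i + 1)).1 → t.card = m (a i) →
      g (a i) t = col i := fun i => hnext2 (chain i)
  obtain ⟨c, hc⟩ := Finite.exists_infinite_fiber col
  have hI : (col ⁻¹' {c}).Infinite := Set.infinite_coe_iff.mp hc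
  refine ⟨a '' (col ⁻¹' {c}), ?_, hI.image (hamono.injective.injOn), c, ?_⟩
  · rintro x ⟨i, _, rfl⟩; exact hXsub i (hmem i)
  · rintro a' t ⟨i, hi, rfl⟩ ht hgt' hcard
    have htsub : ↑t ⊆ (chain (i + 1)).1 := by
      intro x hx
      obtain ⟨j, _, rfl⟩ := ht hx
      have hij : i < j := hamono.lt_iff_lt.mp (hgt' _ hx)
      exact hmono (i + 1) j hij (hmem j)
    rw [hhom i t htsub hcard]
    exact hi

/-- Infinite Ramsey theorem for `n`-element subsets of `ℕ`. -/
lemma ramsey {k : ℕ} (n : ℕ) (f : Finset ℕ → Fin k) (X : Set ℕ) (hX : X.Infinite) :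
    ∃ Y, Y ⊆ X ∧ Y.Infinite ∧ ∃ c : Fin k,
      ∀ s : Finset ℕ, ↑s ⊆ Y → s.card = n → f s = c := by
  induction n generalizing f X with
  | zero =>
    exact ⟨X, subset_rfl, hX, f ∅, fun s _ hs => by rw [Finset.card_eq_zero.mp hs]⟩
  | succ n ih =>
    obtain ⟨H, hHX, hHinf, c, hc⟩ := diag (fun a t => f (insert a t)) (fun _ => n) X hX
      (fun a Z hZ => ih (fun t => f (insert a t)) Z hZ)
    refine ⟨H, hHX, hHinf, c, fun s hs hcard => ?_⟩
    have hne : s.Nonempty := Finset.card_pos.mp (by omega)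
    have h1 : s.min' hne ∈ s := s.min'_mem hne
    have h2 := hc (s.min' hne) (s.erase (s.min' hne)) (hs h1)
      ((Set.Subset.trans (by exact_mod_cast Finset.coe_subset.mpr (s.erase_subset _)) hs))
      (fun x hx => lt_of_le_of_ne (s.min'_le x (Finset.mem_of_mem_erase hx))
        (Ne.symm (Finset.ne_of_mem_erase hx)))
      (by rw [Finset.card_erase_of_mem h1, hcard]; rfl)
    rwa [Finset.insert_erase h1] at h2

/-- Large Ramsey Theorem: for every `k ≥ 1` and every coloring
`f : [ℕ]^{!ω} → {0, …, k-1}` there is an infinite `H ⊆ ℕ` with `f` constant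
on `[H]^{!ω}`. -/
theorem stmt19 (k : ℕ) (hk : 1 ≤ k) (f : Finset ℕ → Fin k) :
    ∃ H : Set ℕ, H.Infinite ∧
      ∃ c : Fin k, ∀ s : Finset ℕ, ExLarge s → ↑s ⊆ H → f s = c := by
  obtain ⟨H, _, hHinf, c, hc⟩ := diag (fun a t => f (insert a t)) (fun a => a) Set.univ
    Set.infinite_univ (fun a Z hZ => ramsey a (fun t => f (insert a t)) Z hZ)
  refine ⟨H, hHinf, c, fun s hs hsub => ?_⟩
  obtain ⟨hne, hcard⟩ := hs
  have hmin : sInf (↑s : Set ℕ) = s.min' hne := by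
    apply le_antisymm
    · exact Nat.sInf_le (by exact_mod_cast s.min'_mem hne)
    · exact s.min'_le _ (by exact_mod_cast Nat.sInf_mem (Set.nonempty_coe_sort.mp
        (by exact_mod_cast hne.to_set.to_subtype)))
  have h1 : s.min' hne ∈ s := s.min'_mem hne
  have h2 := hc (s.min' hne) (s.erase (s.min' hne)) (hsub h1)
    ((Set.Subset.trans (by exact_mod_cast Finset.coe_subset.mpr (s.erase_subset _)) hsub))
    (fun x hx => lt_of_le_of_ne (s.min'_le x (Finset.mem_of_mem_erase hx))
      (Ne.symm (Finset.ne_of_mem_erase hx)))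
    (by rw [Finset.card_erase_of_mem h1, hcard, hmin]; omega)
  rwa [Finset.insert_erase h1] at h2
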